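/- arXiv:2006.05535 — 2 statements merged into one kernel-verified Lean document; each statement's English description precedes it below -/
import Mathlib

section
/- The multi-bit encoder satisfies ε-local differential privacy: for all x, x' ∈ [α,β]^d and all outputs y ∈ {−1,0,1}^d, Pr[M(x) = y] ≤ e^ε · Pr[M(x') = y]. -/
open Real Finset

/-- Per-coordinate probability that the multi-bit encoder outputs `1` on a sampled
coordinate with input value `xi`. -/
noncomputable def mbProb1 (α β ε : ℝ) (m : ℕ) (xi : ℝ) : ℝ :=
  1 / (exp (ε / m) + 1) + (xi - α) / (β - α) * ((exp (ε / m) - 1) / (exp (ε / m) + 1))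

/-- Probability that the multi-bit encoder with sampling parameter `m` on input
`x : Fin d → ℝ` outputs the vector `y ∈ {-1,0,1}^d`: a uniform `m`-subset of the
coordinates is nonzero (probability `1 / (d choose m)` for each such support), and on each
sampled coordinate the output is `1` with probability `mbProb1` and `-1` otherwise. -/
noncomputable def mbMechProb (α β ε : ℝ) (m d : ℕ) (x y : Fin d → ℝ) : ℝ :=
  if (univ.filter fun i => y i ≠ 0).card = m then
    (∏ i ∈ univ.filter fun i => y i ≠ 0,
      (if y i = 1 then mbProb1 α β ε m (x i) else 1 - mbProb1 α β ε m (x i)))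
      / (d.choose m : ℝ)
  else 0

lemma mbProb1_mem (α β ε : ℝ) (m : ℕ) (hαβ : α < β) (hε : 0 < ε) (hm : 1 ≤ m)
    {xi : ℝ} (hxi : xi ∈ Set.Icc α β) :
    1 / (exp (ε / m) + 1) ≤ mbProb1 α β ε m xi ∧
      mbProb1 α β ε m xi ≤ exp (ε / m) / (exp (ε / m) + 1) := by
  have hmpos : (0:ℝ) < m := by exact_mod_cast hm
  have hE1 : (1:ℝ) < exp (ε / m) := by
    have : (0:ℝ) < ε / m := div_pos hε hmpos
    exact Real.one_lt_exp_iff.mpr this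
  set E := exp (ε / m) with hE
  have hEpos : (0:ℝ) < E + 1 := by linarith
  have ht0 : 0 ≤ (xi - α) / (β - α) := div_nonneg (by linarith [hxi.1]) (by linarith)
  have ht1 : (xi - α) / (β - α) ≤ 1 := by
    rw [div_le_one (by linarith)]; linarith [hxi.2]
  constructor
  · unfold mbProb1
    have : 0 ≤ (xi - α) / (β - α) * ((E - 1) / (E + 1)) :=
      mul_nonneg ht0 (div_nonneg (by linarith) (by linarith))
    rw [← hE]; linarith
  · unfold mbProb1
    rw [← hE]
    have h1 : (xi - α) / (β - α) * ((E - 1) / (E + 1)) ≤ (E - 1) / (E + 1) := by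
      nlinarith [div_nonneg (le_of_lt (by linarith : (0:ℝ) < E - 1)) hEpos.le,
        mul_le_of_le_one_left (div_nonneg (by linarith : (0:ℝ) ≤ E - 1) hEpos.le) ht1]
    have h2 : 1 / (E + 1) + (E - 1) / (E + 1) = E / (E + 1) := by
      field_simp; ring
    linarith

/-- the multi-bit encoder satisfies `ε`-local differential privacy. -/
theorem multibit_encoder_ldp (α β ε : ℝ) (m d : ℕ) (hαβ : α < β) (hε : 0 < ε)
    (hm : 1 ≤ m) (hmd : m ≤ d) (x x' : Fin d → ℝ)
    (hx : ∀ i, x i ∈ Set.Icc α β) (hx' : ∀ i, x' i ∈ Set.Icc α β)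
    (y : Fin d → ℝ) (hy : ∀ i, y i = -1 ∨ y i = 0 ∨ y i = 1) :
    mbMechProb α β ε m d x y ≤ exp ε * mbMechProb α β ε m d x' y := by
  have hmpos : (0:ℝ) < m := by exact_mod_cast hm
  have hE1 : (1:ℝ) < exp (ε / m) := by
    have : (0:ℝ) < ε / m := div_pos hε hmpos
    exact Real.one_lt_exp_iff.mpr this
  set E := exp (ε / m) with hE
  have hEpos : (0:ℝ) < E + 1 := by linarith
  unfold mbMechProb
  by_cases hc : (univ.filter fun i => y i ≠ 0).card = m
  · simp only [hc, if_pos]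
    have hC : (0:ℝ) < (d.choose m : ℝ) := by
      exact_mod_cast Nat.choose_pos hmd
    rw [← mul_div_assoc]
    gcongr ?_ / _
    -- per-coordinate bound
    have key : ∀ i ∈ univ.filter fun i => y i ≠ 0,
        (if y i = 1 then mbProb1 α β ε m (x i) else 1 - mbProb1 α β ε m (x i)) ≤
        E * (if y i = 1 then mbProb1 α β ε m (x' i) else 1 - mbProb1 α β ε m (x' i)) := by
      intro i _
      obtain ⟨hl, hu⟩ := mbProb1_mem α β ε m hαβ hε hm (hx i)
      obtain ⟨hl', hu'⟩ := mbProb1_mem α β ε m hαβ hε hm (hx' i)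
      rw [← hE] at hl hu hl' hu'
      by_cases hyi : y i = 1
      · simp only [hyi, if_pos, if_true]
        calc mbProb1 α β ε m (x i) ≤ E / (E + 1) := hu
          _ = E * (1 / (E + 1)) := by ring
          _ ≤ E * mbProb1 α β ε m (x' i) := by
              apply mul_le_mul_of_nonneg_left hl' (by linarith)
      · simp only [hyi, if_false]
        calc 1 - mbProb1 α β ε m (x i) ≤ 1 - 1 / (E + 1) := by linarith
          _ = E / (E + 1) := by field_simp; ring
          _ = E * (1 / (E + 1)) := by ring
          _ ≤ E * (1 - mbProb1 α β ε m (x' i)) := by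
              apply mul_le_mul_of_nonneg_left ?_ (by linarith)
              have : 1 / (E + 1) ≤ 1 - E / (E + 1) := by
                rw [le_sub_iff_add_le]
                have : 1 / (E + 1) + E / (E + 1) = 1 := by field_simp; ring
                linarith
              linarith
    have hnn : ∀ i ∈ univ.filter fun i => y i ≠ 0,
        0 ≤ (if y i = 1 then mbProb1 α β ε m (x i) else 1 - mbProb1 α β ε m (x i)) := by
      intro i _
      obtain ⟨hl, hu⟩ := mbProb1_mem α β ε m hαβ hε hm (hx i)
      rw [← hE] at hl hu
      have h1 : 0 < 1 / (E + 1) := by positivity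
      have h2 : E / (E + 1) < 1 := by
        rw [div_lt_one hEpos]; linarith
      split <;> linarith
    calc (∏ i ∈ univ.filter fun i => y i ≠ 0,
        (if y i = 1 then mbProb1 α β ε m (x i) else 1 - mbProb1 α β ε m (x i)))
        ≤ ∏ i ∈ univ.filter fun i => y i ≠ 0,
          E * (if y i = 1 then mbProb1 α β ε m (x' i) else 1 - mbProb1 α β ε m (x' i)) :=
          Finset.prod_le_prod hnn key
      _ = E ^ m * ∏ i ∈ univ.filter fun i => y i ≠ 0,
          (if y i = 1 then mbProb1 α β ε m (x' i) else 1 - mbProb1 α β ε m (x' i)) := by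
          rw [Finset.prod_mul_distrib, Finset.prod_const, hc]
      _ = exp ε * _ := by
          congr 1
          rw [hE, ← Real.exp_nat_mul]
          congr 1
          field_simp
  · simp only [hc, if_neg, if_false]
    simp
end

section
/- The function f(z) = z·coth²(z/2) is strictly convex on (0, ∞). -/
open Real

/-- Auxiliary: first derivative formula of `z ↦ z * coth²(z/2)`. -/
noncomputable def cothSqF (x : ℝ) : ℝ :=
  (Real.cosh (x/2) / Real.sinh (x/2))^2 +
    x * (Real.cosh (x/2) / Real.sinh (x/2)) * (1 - (Real.cosh (x/2) / Real.sinh (x/2))^2)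

/-- Auxiliary: second derivative formula of `z ↦ z * coth²(z/2)`. -/
noncomputable def cothSqG (x : ℝ) : ℝ :=
  (1 - (Real.cosh (x/2) / Real.sinh (x/2))^2) *
    (2 * (Real.cosh (x/2) / Real.sinh (x/2)) +
      x * (1 - 3 * (Real.cosh (x/2) / Real.sinh (x/2))^2) / 2)

lemma hasDerivAt_coth_half {x : ℝ} (hs : Real.sinh (x/2) ≠ 0) :
    HasDerivAt (fun y : ℝ => Real.cosh (y/2) / Real.sinh (y/2))
      ((1 - (Real.cosh (x/2) / Real.sinh (x/2))^2) / 2) x := by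
  have hu : HasDerivAt (fun y : ℝ => y / 2) (1 / 2 : ℝ) x := by
    simpa using (hasDerivAt_id x).div_const 2
  have hc : HasDerivAt (fun y : ℝ => Real.cosh (y/2)) (Real.sinh (x/2) * (1/2)) x := hu.cosh
  have hsd : HasDerivAt (fun y : ℝ => Real.sinh (y/2)) (Real.cosh (x/2) * (1/2)) x := hu.sinh
  have h : HasDerivAt (fun y : ℝ => Real.cosh (y/2) / Real.sinh (y/2)) _ x := hc.div hsd hs
  convert h using 1
  have key := Real.cosh_sq_sub_sinh_sq (x/2)
  field_simp

lemma aux_psi'_pos : ∀ x > (0:ℝ), 0 < 2 + x * Real.sinh x - Real.cosh x := by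
  intro x hx
  set g : ℝ → ℝ := fun y => 2 + y * Real.sinh y - Real.cosh y with hg
  have hd : ∀ y : ℝ, HasDerivAt g (y * Real.cosh y) y := by
    intro y
    have h : HasDerivAt g _ y := ((hasDerivAt_const y (2:ℝ)).add
      ((hasDerivAt_id y).mul (Real.hasDerivAt_sinh y))).sub (Real.hasDerivAt_cosh y)
    convert h using 1
    simp only [id_eq]
    ring
  have hmono : StrictMonoOn g (Set.Ici (0:ℝ)) := by
    apply strictMonoOn_of_deriv_pos (convex_Ici 0)
    · exact (Continuous.continuousOn (by fun_prop))
    · intro y hy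
      rw [interior_Ici] at hy
      rw [(hd y).deriv]
      exact mul_pos hy (Real.cosh_pos y)
  have h0 : g 0 = 1 := by norm_num [hg]
  have := hmono (Set.self_mem_Ici) (Set.mem_Ici.2 hx.le) hx
  rw [h0] at this
  simp only [hg] at this ⊢
  linarith

lemma aux_psi_pos : ∀ x > (0:ℝ), 2 * Real.sinh x < x * Real.cosh x + 2 * x := by
  intro x hx
  set g : ℝ → ℝ := fun y => y * Real.cosh y + 2 * y - 2 * Real.sinh y with hg
  have hd : ∀ y : ℝ, HasDerivAt g (2 + y * Real.sinh y - Real.cosh y) y := by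
    intro y
    have h : HasDerivAt g _ y := (((hasDerivAt_id y).mul (Real.hasDerivAt_cosh y)).add
      ((hasDerivAt_id y).const_mul 2)).sub ((Real.hasDerivAt_sinh y).const_mul 2)
    convert h using 1
    simp only [id_eq]
    ring
  have hmono : StrictMonoOn g (Set.Ici (0:ℝ)) := by
    apply strictMonoOn_of_deriv_pos (convex_Ici 0)
    · exact (Continuous.continuousOn (by fun_prop))
    · intro y hy
      rw [interior_Ici] at hy
      rw [(hd y).deriv]
      exact aux_psi'_pos y hy
  have h0 : g 0 = 0 := by simp [hg]
  have := hmono (Set.self_mem_Ici) (Set.mem_Ici.2 hx.le) hx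
  rw [h0] at this
  simp only [hg] at this
  linarith

/-- The key inequality: `4·cosh(x/2)·sinh(x/2) < x·(2·cosh²(x/2)+1)` for `x > 0`. -/
lemma aux_key {x : ℝ} (hx : 0 < x) :
    4 * Real.cosh (x/2) * Real.sinh (x/2) < x * (2 * Real.cosh (x/2)^2 + 1) := by
  have h1 : Real.sinh x = 2 * Real.sinh (x/2) * Real.cosh (x/2) := by
    have := Real.sinh_two_mul (x/2)
    rw [show 2 * (x/2) = x by ring] at this
    exact this
  have h2 : Real.cosh x = 2 * Real.cosh (x/2)^2 - 1 := by
    have := Real.cosh_two_mul (x/2)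
    have h3 := Real.cosh_sq (x/2)
    rw [show 2 * (x/2) = x by ring] at this
    rw [this, h3]; ring
  have := aux_psi_pos x hx
  rw [h1, h2] at this
  nlinarith

lemma hasDerivAt_f {x : ℝ} (hs : Real.sinh (x/2) ≠ 0) :
    HasDerivAt (fun z : ℝ => z * (Real.cosh (z / 2) / Real.sinh (z / 2)) ^ 2)
      (cothSqF x) x := by
  have hq := hasDerivAt_coth_half hs
  have hq2 := hq.pow 2
  have h : HasDerivAt (fun z : ℝ => z * (Real.cosh (z / 2) / Real.sinh (z / 2)) ^ 2) _ x :=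
    (hasDerivAt_id x).mul hq2
  convert h using 1
  simp only [cothSqF, id_eq]
  norm_num
  ring

lemma hasDerivAt_F {x : ℝ} (hs : Real.sinh (x/2) ≠ 0) :
    HasDerivAt cothSqF (cothSqG x) x := by
  have hq := hasDerivAt_coth_half hs
  have hq2 := hq.pow 2
  have h1 := (hasDerivAt_const x (1:ℝ)).sub hq2
  have h2 := ((hasDerivAt_id x).mul hq).mul h1
  have h : HasDerivAt cothSqF _ x := hq2.add h2
  convert h using 1
  simp only [cothSqG, id_eq]
  norm_num
  ring

lemma cothSqG_pos {x : ℝ} (hx : 0 < x) : 0 < cothSqG x := by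
  have hs : 0 < Real.sinh (x/2) := Real.sinh_pos_iff.2 (by linarith)
  have hc : 0 < Real.cosh (x/2) := Real.cosh_pos _
  have hlt : Real.sinh (x/2) < Real.cosh (x/2) := Real.sinh_lt_cosh _
  set q : ℝ := Real.cosh (x/2) / Real.sinh (x/2) with hqdef
  have hq1 : 1 < q := (one_lt_div hs).2 hlt
  have hA : 1 - q^2 < 0 := by nlinarith
  have hB : 2 * q + x * (1 - 3 * q^2) / 2 < 0 := by
    have key := aux_key hx
    have hcsq := Real.cosh_sq (x/2)
    have hform : 2 * (Real.cosh (x/2) / Real.sinh (x/2)) + x * (1 - 3 *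
        (Real.cosh (x/2) / Real.sinh (x/2)) ^ 2) / 2 =
        (4 * Real.cosh (x/2) * Real.sinh (x/2) + x * (Real.sinh (x/2)^2 - 3 * Real.cosh (x/2)^2))
          / (2 * Real.sinh (x/2)^2) := by
      field_simp
      ring
    rw [hqdef, hform]
    apply div_neg_of_neg_of_pos _ (by positivity)
    nlinarith [key, hcsq]
  simpa [cothSqG, hqdef] using mul_pos_of_neg_of_neg hA hB

/-- the function `f(z) = z·coth²(z/2)` is strictly convex on `(0,∞)`. -/
theorem strictConvexOn_z_coth_sq :
    StrictConvexOn ℝ (Set.Ioi (0 : ℝ))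
      (fun z : ℝ => z * (Real.cosh (z / 2) / Real.sinh (z / 2)) ^ 2) := by
  apply strictConvexOn_of_deriv2_pos (convex_Ioi 0)
  · apply ContinuousOn.mul continuousOn_id
    apply ContinuousOn.pow
    apply ContinuousOn.div
    · exact Continuous.continuousOn (by fun_prop)
    · exact Continuous.continuousOn (by fun_prop)
    · intro y hy
      exact ne_of_gt (Real.sinh_pos_iff.2 (by simpa using (half_pos (Set.mem_Ioi.1 hy))))
  · intro x hx
    rw [interior_Ioi] at hx
    have hs : (0:ℝ) < Real.sinh (x/2) := Real.sinh_pos_iff.2 (by linarith [Set.mem_Ioi.1 hx])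
    have heq : deriv (fun z : ℝ => z * (Real.cosh (z / 2) / Real.sinh (z / 2)) ^ 2)
        =ᶠ[nhds x] cothSqF := by
      filter_upwards [Ioi_mem_nhds (Set.mem_Ioi.1 hx)] with y hy
      have hsy : Real.sinh (y/2) ≠ 0 :=
        ne_of_gt (Real.sinh_pos_iff.2 (by linarith [Set.mem_Ioi.1 hy]))
      exact (hasDerivAt_f hsy).deriv
    have h2 : (deriv^[2] (fun z : ℝ => z * (Real.cosh (z / 2) / Real.sinh (z / 2)) ^ 2)) x
        = deriv (deriv (fun z : ℝ => z * (Real.cosh (z / 2) / Real.sinh (z / 2)) ^ 2)) x := by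
      rfl
    rw [h2, heq.deriv_eq, (hasDerivAt_F hs.ne').deriv]
    exact cothSqG_pos (Set.mem_Ioi.1 hx)
end
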